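/- If R is a well-founded rewrite relation (closed under contexts and substitutions), then the relative relation (R ∪ ⊳)/⊵, i.e., ⊵* · (R ∪ ⊳) · ⊵*, is well-founded, where ⊵ is encompassment and ⊳ is proper encompassment. -/

import Mathlib

namespace KB

-- Generic ARS notions
def NF {α : Type _} (r : α → α → Prop) (a : α) : Prop := ∀ b, ¬ r a b

def SymmCl {α : Type _} (r : α → α → Prop) (a b : α) : Prop := r a b ∨ r b a

def Conv {α : Type _} (r : α → α → Prop) : α → α → Prop :=
  Relation.ReflTransGen (SymmCl r)

def Joinable {α : Type _} (r : α → α → Prop) (a b : α) : Prop :=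
  ∃ c, Relation.ReflTransGen r a c ∧ Relation.ReflTransGen r b c

def Confluent {α : Type _} (r : α → α → Prop) : Prop :=
  ∀ a b c, Relation.ReflTransGen r a b → Relation.ReflTransGen r a c → Joinable r b c

def Terminating {α : Type _} (r : α → α → Prop) : Prop :=
  WellFounded (fun a b => r b a)

def Complete {α : Type _} (r : α → α → Prop) : Prop := Terminating r ∧ Confluent r

def NormTo {α : Type _} (r : α → α → Prop) (a b : α) : Prop :=
  Relation.ReflTransGen r a b ∧ NF r b

-- First-order terms
inductive Term (F V : Type) : Type where
  | var : V → Term F V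
  | app : F → List (Term F V) → Term F V

variable {F V : Type}

def Term.subst (σ : V → Term F V) : Term F V → Term F V
  | .var x => σ x
  | .app f ts => .app f (ts.attach.map fun t => Term.subst σ t.1)
decreasing_by
  simp only [Term.app.sizeOf_spec]
  have := List.sizeOf_lt_of_mem t.2
  omega

def Term.rename (π : V → V) (t : Term F V) : Term F V :=
  t.subst (fun x => Term.var (π x))

inductive Ctx (F V : Type) : Type where
  | hole : Ctx F V
  | cons : F → List (Term F V) → Ctx F V → List (Term F V) → Ctx F V

def Ctx.fill : Ctx F V → Term F V → Term F V
  | .hole, t => t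
  | .cons f l C r, t => Term.app f (l ++ C.fill t :: r)

abbrev TRS (F V : Type) := Set (Term F V × Term F V)

def Step (R : TRS F V) (s t : Term F V) : Prop :=
  ∃ (C : Ctx F V) (σ : V → Term F V) (l r : Term F V),
    (l, r) ∈ R ∧ s = C.fill (l.subst σ) ∧ t = C.fill (r.subst σ)

inductive InVars (x : V) : Term F V → Prop where
  | var : InVars x (Term.var x)
  | app {f : F} {ts : List (Term F V)} {t : Term F V} :
      t ∈ ts → InVars x t → InVars x (Term.app f ts)

def WellFormedRule (l r : Term F V) : Prop :=
  (∀ x : V, l ≠ Term.var x) ∧ ∀ x, InVars x r → InVars x l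

def IsTRS (R : TRS F V) : Prop := ∀ p ∈ R, WellFormedRule p.1 p.2

inductive Ground : Term F V → Prop where
  | app {f : F} {ts : List (Term F V)} : (∀ t ∈ ts, Ground t) → Ground (Term.app f ts)

def GroundSys (R : TRS F V) : Prop := ∀ p ∈ R, Ground p.1 ∧ Ground p.2

def LeftReduced (R : TRS F V) : Prop := ∀ p ∈ R, NF (Step (R \ {p})) p.1
def RightReduced (R : TRS F V) : Prop := ∀ p ∈ R, NF (Step R) p.2
def Reduced (R : TRS F V) : Prop := LeftReduced R ∧ RightReduced R

def RuleVariant (p q : Term F V × Term F V) : Prop :=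
  ∃ π : V → V, Function.Bijective π ∧ p.1 = q.1.rename π ∧ p.2 = q.2.rename π

def LitSim (R S : TRS F V) : Prop :=
  (∀ p ∈ R, ∃ q ∈ S, RuleVariant p q) ∧ (∀ q ∈ S, ∃ p ∈ R, RuleVariant q p)

def Encompass (s t : Term F V) : Prop :=
  ∃ (C : Ctx F V) (σ : V → Term F V), s = C.fill (t.subst σ)

def PEncompass (s t : Term F V) : Prop := Encompass s t ∧ ¬ Encompass t s

def ReductionOrder (gt : Term F V → Term F V → Prop) : Prop :=
  Transitive gt ∧ WellFounded (fun a b => gt b a) ∧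
  (∀ (C : Ctx F V) s t, gt s t → gt (C.fill s) (C.fill t)) ∧
  (∀ (σ : V → Term F V) s t, gt s t → gt (s.subst σ) (t.subst σ))

-- positions
def subt : List ℕ → Term F V → Option (Term F V)
  | [], t => some t
  | _ :: _, Term.var _ => none
  | i :: p, Term.app _ ts => (ts[i]?).bind (subt p)

def repl : List ℕ → Term F V → Term F V → Option (Term F V)
  | [], _, u => some u
  | _ :: _, Term.var _, _ => none
  | i :: p, Term.app f ts, u =>
      (ts[i]?).bind fun w => (repl p w u).map fun w' => Term.app f (ts.set i w')

def FunPos (p : List ℕ) (t : Term F V) : Prop :=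
  ∃ f ts, subt p t = some (Term.app f ts)

def Unifier (σ : V → Term F V) (s t : Term F V) : Prop := s.subst σ = t.subst σ

def IsMGU (σ : V → Term F V) (s t : Term F V) : Prop :=
  Unifier σ s t ∧ ∀ τ, Unifier τ s t → ∃ ρ, ∀ x, (σ x).subst ρ = τ x

def VarsDisjoint (p q : Term F V × Term F V) : Prop :=
  ∀ x, ¬ ((InVars x p.1 ∨ InVars x p.2) ∧ (InVars x q.1 ∨ InVars x q.2))

def Overlap (R : TRS F V) (l1 r1 : Term F V) (p : List ℕ) (l2 r2 : Term F V) : Prop :=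
  (∃ q ∈ R, RuleVariant (l1, r1) q) ∧
  (∃ q ∈ R, RuleVariant (l2, r2) q) ∧
  VarsDisjoint (l1, r1) (l2, r2) ∧
  FunPos p l2 ∧
  (∃ w, subt p l2 = some w ∧ ∃ σ, Unifier σ l1 w) ∧
  (p = [] → ¬ RuleVariant (l1, r1) (l2, r2))

def CPeak (R : TRS F V) (t : Term F V) (p : List ℕ) (s u : Term F V) : Prop :=
  ∃ (l1 r1 l2 r2 : Term F V) (σ : V → Term F V) (w : Term F V),
    Overlap R l1 r1 p l2 r2 ∧ subt p l2 = some w ∧ IsMGU σ l1 w ∧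
    s = l2.subst σ ∧ u = r2.subst σ ∧
    repl p (l2.subst σ) (r1.subst σ) = some t

def PrimeCPeak (R : TRS F V) (t : Term F V) (p : List ℕ) (s u : Term F V) : Prop :=
  CPeak R t p s u ∧
  ∀ w v, subt p s = some w → (∃ q, q ≠ [] ∧ subt q w = some v) → NF (Step R) v

def PCP (R : TRS F V) : Set (Term F V × Term F V) :=
  { e | ∃ p s, PrimeCPeak R e.1 p s e.2 }

def Nabla (R : TRS F V) (s u w : Term F V) : Prop :=
  Relation.TransGen (Step R) s u ∧ Relation.TransGen (Step R) s w ∧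
  (Joinable (Step R) u w ∨ SymmCl (Step (PCP R)) u w)

-- counted conversions and rewrite sequences
inductive ConvN {α : Type _} (r : α → α → Prop) : ℕ → ℕ → α → α → Prop where
  | refl (a : α) : ConvN r 0 0 a a
  | fwd {l n : ℕ} {a b c : α} : r a b → ConvN r l n b c → ConvN r l (n + 1) a c
  | bwd {l n : ℕ} {a b c : α} : r b a → ConvN r l n b c → ConvN r (l + 1) n a c

inductive StepsN {α : Type _} (r : α → α → Prop) : ℕ → α → α → Prop where
  | refl (a : α) : StepsN r 0 a a
  | step {n : ℕ} {a b c : α} : r a b → StepsN r n b c → StepsN r (n + 1) a c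

def RandomDescent {α : Type _} (r : α → α → Prop) : Prop :=
  ∀ l m a b, ConvN r l m a b → NF r b → ∃ n, StepsN r n a b ∧ n + l = m



section EncompAux
variable {F V : Type}

theorem Term.my_ind {motive : Term F V → Prop}
    (hvar : ∀ x, motive (Term.var x))
    (happ : ∀ f ts, (∀ t ∈ ts, motive t) → motive (Term.app f ts)) :
    ∀ t, motive t
  | .var x => hvar x
  | .app f ts => happ f ts (fun t ht => Term.my_ind hvar happ t)
decreasing_by
  simp only [Term.app.sizeOf_spec]
  have := List.sizeOf_lt_of_mem ht
  omega

theorem Term.subst_var (σ : V → Term F V) (x : V) : (Term.var x).subst σ = σ x := by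
  rw [Term.subst]

theorem Term.subst_app (σ : V → Term F V) (f : F) (ts : List (Term F V)) :
    (Term.app f ts).subst σ = Term.app f (ts.map (fun t => t.subst σ)) := by
  rw [Term.subst]; congr 1; simp

theorem Term.subst_id (t : Term F V) : t.subst (fun x => Term.var x) = t := by
  induction t using Term.my_ind with
  | hvar x => rw [Term.subst_var]
  | happ f ts ih =>
    rw [Term.subst_app]
    congr 1
    exact (List.map_congr_left ih).trans (List.map_id _)

theorem Term.subst_subst (σ τ : V → Term F V) (t : Term F V) :
    (t.subst σ).subst τ = t.subst (fun x => (σ x).subst τ) := by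
  induction t using Term.my_ind with
  | hvar x => rw [Term.subst_var, Term.subst_var]
  | happ f ts ih =>
    rw [Term.subst_app, Term.subst_app, Term.subst_app, List.map_map]
    congr 1
    exact List.map_congr_left ih

def Ctx.subst (σ : V → Term F V) : Ctx F V → Ctx F V
  | .hole => .hole
  | .cons f l C r => .cons f (l.map (·.subst σ)) (C.subst σ) (r.map (·.subst σ))

theorem Ctx.fill_subst (σ : V → Term F V) (C : Ctx F V) (t : Term F V) :
    (C.fill t).subst σ = (C.subst σ).fill (t.subst σ) := by
  induction C with
  | hole => rfl
  | cons f l C r ih => simp [Ctx.fill, Ctx.subst, Term.subst_app, ih]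

def Ctx.comp : Ctx F V → Ctx F V → Ctx F V
  | .hole, D => D
  | .cons f l C r, D => .cons f l (C.comp D) r

theorem Ctx.fill_comp (C D : Ctx F V) (t : Term F V) :
    (C.comp D).fill t = C.fill (D.fill t) := by
  induction C with
  | hole => rfl
  | cons f l C r ih => simp [Ctx.comp, Ctx.fill, ih]

theorem Encompass.refl (t : Term F V) : Encompass t t :=
  ⟨Ctx.hole, fun x => Term.var x, (Term.subst_id t).symm⟩

theorem Encompass.trans {s t u : Term F V} (h1 : Encompass s t) (h2 : Encompass t u) :
    Encompass s u := by
  obtain ⟨C, σ, hs⟩ := h1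
  obtain ⟨D, τ, ht⟩ := h2
  refine ⟨C.comp (D.subst σ), fun x => (τ x).subst σ, ?_⟩
  rw [Ctx.fill_comp, ← Term.subst_subst, ← Ctx.fill_subst, ← ht, hs]

theorem encompass_of_rtg {s t : Term F V} (h : Relation.ReflTransGen Encompass s t) :
    Encompass s t := by
  induction h with
  | refl => exact Encompass.refl s
  | tail _ h2 ih => exact ih.trans h2

/-- Key commutation: ⊵ ∘ R ⊆ R ∘ ⊵ for a rewrite relation R. -/
theorem encompass_comm {R : Term F V → Term F V → Prop}
    (hctx : ∀ (C : Ctx F V) (s t : Term F V), R s t → R (C.fill s) (C.fill t))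
    (hsub : ∀ (σ : V → Term F V) (s t : Term F V), R s t → R (s.subst σ) (t.subst σ))
    {s t u : Term F V} (h1 : Encompass s t) (h2 : R t u) :
    ∃ v, R s v ∧ Encompass v u := by
  obtain ⟨C, σ, hs⟩ := h1
  exact ⟨C.fill (u.subst σ), hs ▸ hctx C _ _ (hsub σ _ _ h2), C, σ, rfl⟩

def Term.size : Term F V → ℕ
  | .var _ => 1
  | .app _ ts => 1 + (ts.attach.map fun t => Term.size t.1).sum
decreasing_by
  simp only [Term.app.sizeOf_spec]
  have := List.sizeOf_lt_of_mem t.2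
  omega

theorem Term.size_var (x : V) : (Term.var x : Term F V).size = 1 := by rw [Term.size]

theorem Term.size_app (f : F) (ts : List (Term F V)) :
    (Term.app f ts).size = 1 + (ts.map Term.size).sum := by
  rw [Term.size]; congr 1; simp

theorem Term.size_pos (t : Term F V) : 1 ≤ t.size := by
  induction t using Term.my_ind with
  | hvar x => rw [Term.size_var]
  | happ f ts _ => rw [Term.size_app]; omega

def Term.varsL : Term F V → List V
  | .var x => [x]
  | .app _ ts => (ts.attach.map fun t => Term.varsL t.1).flatten
decreasing_by
  simp only [Term.app.sizeOf_spec]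
  have := List.sizeOf_lt_of_mem t.2
  omega

theorem Term.varsL_var (x : V) : (Term.var x : Term F V).varsL = [x] := by rw [Term.varsL]

theorem Term.varsL_app (f : F) (ts : List (Term F V)) :
    (Term.app f ts).varsL = (ts.map Term.varsL).flatten := by
  rw [Term.varsL]; congr 1; simp

theorem Term.mem_varsL_subst (σ : V → Term F V) (t : Term F V) (y : V) :
    y ∈ (t.subst σ).varsL ↔ ∃ x ∈ t.varsL, y ∈ (σ x).varsL := by
  induction t using Term.my_ind with
  | hvar x => simp [Term.subst_var, Term.varsL_var]
  | happ f ts ih =>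
    rw [Term.subst_app, Term.varsL_app, Term.varsL_app]
    simp only [List.mem_flatten, List.mem_map, List.map_map]
    constructor
    · rintro ⟨l, ⟨t, ht, rfl⟩, hy⟩
      obtain ⟨x, hx, hyx⟩ := (ih t ht).mp hy
      exact ⟨x, ⟨t.varsL, ⟨t, ht, rfl⟩, hx⟩, hyx⟩
    · rintro ⟨x, ⟨l, ⟨t, ht, rfl⟩, hx⟩, hyx⟩
      exact ⟨(t.subst σ).varsL, ⟨t, ht, rfl⟩, (ih t ht).mpr ⟨x, hx, hyx⟩⟩

/-- size decomposition under substitution. -/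
theorem Term.size_subst (σ : V → Term F V) (t : Term F V) :
    (t.subst σ).size + t.varsL.length
      = t.size + (t.varsL.map (fun x => (σ x).size)).sum := by
  induction t using Term.my_ind with
  | hvar x => simp [Term.subst_var, Term.varsL_var, Term.size_var]; omega
  | happ f ts ih =>
    rw [Term.subst_app, Term.size_app, Term.size_app, Term.varsL_app, List.map_map]
    induction ts with
    | nil => simp
    | cons t ts iht =>
      have h1 := ih t (by simp)
      have h2 := iht (fun u hu => ih u (List.mem_cons_of_mem _ hu))
      simp only [List.map_cons, List.sum_cons, List.flatten_cons, List.length_append,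
        List.map_append, List.sum_append, Function.comp] at *
      omega

theorem Term.size_le_subst (σ : V → Term F V) (t : Term F V) :
    t.size ≤ (t.subst σ).size := by
  have h := Term.size_subst σ t
  have : t.varsL.length ≤ (t.varsL.map (fun x => (σ x).size)).sum := by
    have : (t.varsL.map (fun x => (σ x).size)).length = t.varsL.length := List.length_map _
    calc t.varsL.length = (t.varsL.map (fun x => (σ x).size)).length := this.symm
    _ ≤ _ := List.length_le_sum_of_one_le _ (by
        intro i hi
        obtain ⟨x, _, rfl⟩ := List.mem_map.mp hi
        exact Term.size_pos _)
  omega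

theorem Term.size_subst_eq (σ : V → Term F V) (t : Term F V)
    (h : (t.subst σ).size = t.size) : ∀ x ∈ t.varsL, (σ x).size = 1 := by
  have hd := Term.size_subst σ t
  have hsum : (t.varsL.map (fun x => (σ x).size)).sum = t.varsL.length := by omega
  intro x hx
  by_contra hne
  have h2 : 2 ≤ (σ x).size := by
    have := Term.size_pos (σ x); omega
  -- sum ≥ length + 1
  have key : ∀ l : List V, x ∈ l → l.length + 1 ≤ (l.map (fun x => (σ x).size)).sum := by
    intro l hxl
    induction l with
    | nil => simp at hxl
    | cons a l ihl =>
      simp only [List.map_cons, List.sum_cons, List.length_cons]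
      rcases List.mem_cons.mp hxl with rfl | hx'
      · have : l.length ≤ (l.map (fun y => (σ y).size)).sum := by
          calc l.length = (l.map (fun y => (σ y).size)).length := (List.length_map _).symm
          _ ≤ _ := List.length_le_sum_of_one_le _ (by
              rintro i hi; obtain ⟨y, _, rfl⟩ := List.mem_map.mp hi; exact Term.size_pos _)
        omega
      · have := ihl hx'
        have := Term.size_pos (σ a)
        omega
  have := key _ hx
  omega

theorem Term.size_le_fill (C : Ctx F V) (u : Term F V) : u.size ≤ (C.fill u).size := by
  induction C with
  | hole => exact le_refl _
  | cons f l C r ih =>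
    simp only [Ctx.fill, Term.size_app, List.map_append, List.map_cons, List.sum_append,
      List.sum_cons]
    omega

theorem Term.size_lt_fill (f : F) (l : List (Term F V)) (C : Ctx F V) (r : List (Term F V))
    (u : Term F V) : u.size < ((Ctx.cons f l C r).fill u).size := by
  have := Term.size_le_fill C u
  simp only [Ctx.fill, Term.size_app, List.map_append, List.map_cons, List.sum_append,
    List.sum_cons]
  omega

theorem Term.size_eq_one {u : Term F V} (h : u.size = 1) :
    (∃ y, u = Term.var y) ∨ u.varsL = [] := by
  cases u with
  | var y => exact Or.inl ⟨y, rfl⟩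
  | app f ts =>
    right
    rw [Term.size_app] at h
    have hts : ts = [] := by
      cases ts with
      | nil => rfl
      | cons a l =>
        exfalso
        have := Term.size_pos a
        simp only [List.map_cons, List.sum_cons] at h
        omega
    subst hts
    simp [Term.varsL_app]

theorem Term.varsL_length_le (t : Term F V) : t.varsL.length ≤ t.size := by
  induction t using Term.my_ind with
  | hvar x => simp [Term.varsL_var, Term.size_var]
  | happ f ts ih =>
    rw [Term.varsL_app, Term.size_app, List.length_flatten, List.map_map]
    have : ((ts.map Term.varsL).map List.length).sum ≤ (ts.map Term.size).sum := by
      rw [List.map_map]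
      exact List.sum_le_sum (fun u hu => ih u hu)
    rw [List.map_map] at this
    omega

theorem Term.subst_congr {σ τ : V → Term F V} (t : Term F V)
    (h : ∀ x ∈ t.varsL, σ x = τ x) : t.subst σ = t.subst τ := by
  induction t using Term.my_ind with
  | hvar x => rw [Term.subst_var, Term.subst_var, h x (by simp [Term.varsL_var])]
  | happ f ts ih =>
    rw [Term.subst_app, Term.subst_app]
    congr 1
    refine List.map_congr_left (fun u hu => ih u hu (fun x hx => h x ?_))
    rw [Term.varsL_app, List.mem_flatten]
    exact ⟨u.varsL, List.mem_map.mpr ⟨u, hu, rfl⟩, hx⟩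

theorem Term.varsL_subst_ren {σ : V → Term F V} {ρ : V → V} (t : Term F V)
    (h : ∀ x ∈ t.varsL, σ x = Term.var (ρ x)) :
    (t.subst σ).varsL = t.varsL.map ρ := by
  induction t using Term.my_ind with
  | hvar x =>
    rw [Term.subst_var, h x (by simp [Term.varsL_var]), Term.varsL_var, Term.varsL_var]
    rfl
  | happ f ts ih =>
    rw [Term.subst_app, Term.varsL_app, Term.varsL_app, List.map_map, List.map_flatten,
      List.map_map]
    congr 1
    refine List.map_congr_left (fun u hu => ih u hu (fun x hx => h x ?_))
    rw [Term.varsL_app, List.mem_flatten]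
    exact ⟨u.varsL, List.mem_map.mpr ⟨u, hu, rfl⟩, hx⟩

open Classical in
/-- Proper encompassment strictly decreases the measure (size, #distinct vars). -/
theorem pencompass_measure {s t : Term F V} (h : PEncompass s t) :
    Prod.Lex (· < ·) (· < ·) (t.size, t.size - t.varsL.toFinset.card)
      (s.size, s.size - s.varsL.toFinset.card) := by
  classical
  obtain ⟨⟨C, σ, hs⟩, hnot⟩ := h
  have hle2 : t.size ≤ (t.subst σ).size := Term.size_le_subst σ t
  rcases lt_or_eq_of_le (le_trans hle2 (hs ▸ Term.size_le_fill C _)) with hlt | heq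
  · exact Prod.Lex.left _ _ hlt
  · -- sizes equal: C must be the hole
    cases C with
    | cons f l C r =>
      exfalso
      have := Term.size_lt_fill f l C r (t.subst σ)
      rw [← hs] at this
      omega
    | hole =>
      simp only [Ctx.fill] at hs
      subst hs
      have hone : ∀ x ∈ t.varsL, (σ x).size = 1 := Term.size_subst_eq σ t heq.symm
      by_cases hvc : ∀ x ∈ t.varsL, ∃ y, σ x = Term.var y
      · -- variable case: σ is a renaming on vars of t
        set ρ : V → V := fun x => if h : ∃ y, σ x = Term.var y then h.choose else x with hρ
        have hren : ∀ x ∈ t.varsL, σ x = Term.var (ρ x) := by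
          intro x hx
          have h' := hvc x hx
          simp only [hρ, dif_pos h']
          exact h'.choose_spec
        have hvars : (t.subst σ).varsL = t.varsL.map ρ := Term.varsL_subst_ren t hren
        have himg : (t.subst σ).varsL.toFinset = t.varsL.toFinset.image ρ := by
          ext y
          simp [hvars, List.mem_toFinset, Finset.mem_image]
        rcases lt_or_eq_of_le (himg ▸ Finset.card_image_le) with hclt | hceq
        · rw [← heq]
          have hb1 := List.toFinset_card_le t.varsL
          have hb2 := Term.varsL_length_le t
          exact Prod.Lex.right _ (by omega)
        · -- injective renaming: t encompasses s, contradiction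
          exfalso
          apply hnot
          have hinj : Set.InjOn ρ ↑t.varsL.toFinset := by
            apply Finset.injOn_of_card_image_eq
            rw [← himg, hceq]
          refine ⟨Ctx.hole, fun y => if h : ∃ x, x ∈ t.varsL ∧ ρ x = y then
            Term.var h.choose else Term.var y, ?_⟩
          show t = Term.subst _ (t.subst σ)
          rw [Term.subst_subst]
          have : ∀ x ∈ t.varsL, (σ x).subst
              (fun y => if h : ∃ x, x ∈ t.varsL ∧ ρ x = y then Term.var h.choose
                else Term.var y) = Term.var x := by
            intro x hx
            rw [hren x hx, Term.subst_var]
            have hex : ∃ x', x' ∈ t.varsL ∧ ρ x' = ρ x := ⟨x, hx, rfl⟩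
            rw [dif_pos hex]
            congr 1
            exact hinj (by simp [List.mem_toFinset, hex.choose_spec.1])
              (by simp [List.mem_toFinset, hx]) hex.choose_spec.2
          rw [Term.subst_congr t this, Term.subst_id]
      · -- some variable erased: #vars strictly decreases
        push_neg at hvc
        obtain ⟨x, hx, hnv⟩ := hvc
        have hxe : (σ x).varsL = [] := by
          rcases Term.size_eq_one (hone x hx) with ⟨y, hy⟩ | he
          · exact absurd hy (hnv y)
          · exact he
        have hsub : (t.subst σ).varsL.toFinset ⊆
            (t.varsL.toFinset.erase x).biUnion (fun z => (σ z).varsL.toFinset) := by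
          intro y hy
          rw [List.mem_toFinset, Term.mem_varsL_subst] at hy
          obtain ⟨z, hz, hyz⟩ := hy
          have hzx : z ≠ x := by
            rintro rfl
            rw [hxe] at hyz
            exact absurd hyz List.not_mem_nil
          rw [Finset.mem_biUnion]
          exact ⟨z, Finset.mem_erase.mpr ⟨hzx, List.mem_toFinset.mpr hz⟩,
            List.mem_toFinset.mpr hyz⟩
        have hcards : (t.subst σ).varsL.toFinset.card < t.varsL.toFinset.card := by
          have h1 := Finset.card_le_card hsub
          have h2 := Finset.card_biUnion_le
            (s := t.varsL.toFinset.erase x) (t := fun z => (σ z).varsL.toFinset)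
          have h3 : ∀ z ∈ t.varsL.toFinset.erase x, (σ z).varsL.toFinset.card ≤ 1 := by
            intro z hz
            have hz' := List.mem_toFinset.mp (Finset.mem_of_mem_erase hz)
            rcases Term.size_eq_one (hone z hz') with ⟨y, hy⟩ | he
            · rw [hy, Term.varsL_var]; simp
            · rw [he]; simp
          have h4 := Finset.sum_le_card_nsmul _ _ 1 h3
          have h5 : (t.varsL.toFinset.erase x).card = t.varsL.toFinset.card - 1 :=
            Finset.card_erase_of_mem (List.mem_toFinset.mpr hx)
          have h6 : 0 < t.varsL.toFinset.card :=
            Finset.card_pos.mpr ⟨x, List.mem_toFinset.mpr hx⟩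
          simp only [smul_eq_mul, mul_one] at h4
          omega
        rw [← heq]
        have hb1 := List.toFinset_card_le t.varsL
        have hb2 := Term.varsL_length_le t
        exact Prod.Lex.right _ (by omega)

theorem pencompass_wf : WellFounded (fun a b : Term F V => PEncompass b a) := by
  classical
  have hlex : WellFounded (Prod.Lex (α := ℕ) (β := ℕ) (· < ·) (· < ·)) :=
    WellFounded.prod_lex wellFounded_lt wellFounded_lt
  exact Subrelation.wf (fun {a b} h => pencompass_measure h)
    (InvImage.wf (fun t : Term F V => (t.size, t.size - t.varsL.toFinset.card)) hlex)

/-- Well-foundedness of R ∘ ⊵. -/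
theorem wf_R_encomp {R : Term F V → Term F V → Prop}
    (hctx : ∀ (C : Ctx F V) (s t : Term F V), R s t → R (C.fill s) (C.fill t))
    (hsub : ∀ (σ : V → Term F V) (s t : Term F V), R s t → R (s.subst σ) (t.subst σ))
    (hwf : WellFounded (fun a b => R b a)) :
    WellFounded (fun a b : Term F V => ∃ d, R b d ∧ Encompass d a) := by
  constructor
  intro a0
  suffices h : ∀ a b : Term F V, Encompass a b →
      Acc (fun a b => ∃ d, R b d ∧ Encompass d a) b from h a0 a0 (Encompass.refl a0)
  intro a
  induction (hwf.apply a) with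
  | intro a _ ih =>
    intro b hab
    constructor
    rintro c ⟨d, hbd, hdc⟩
    obtain ⟨e, hae, hed⟩ := encompass_comm hctx hsub hab hbd
    exact ih e hae c (hed.trans hdc)

/-- Well-foundedness of (R ∘ ⊵) ∪ ⊳. -/
theorem wf_union {R : Term F V → Term F V → Prop}
    (hctx : ∀ (C : Ctx F V) (s t : Term F V), R s t → R (C.fill s) (C.fill t))
    (hsub : ∀ (σ : V → Term F V) (s t : Term F V), R s t → R (s.subst σ) (t.subst σ))
    (hwf : WellFounded (fun a b => R b a)) :
    WellFounded (fun a b : Term F V =>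
      (∃ d, R b d ∧ Encompass d a) ∨ PEncompass b a) := by
  have hws := wf_R_encomp hctx hsub hwf
  have hwp : WellFounded (fun a b : Term F V => PEncompass b a) := pencompass_wf
  constructor
  intro a0
  suffices h : ∀ a : Term F V, Acc (fun a b : Term F V =>
      (∃ d, R b d ∧ Encompass d a) ∨ PEncompass b a) a from h a0
  intro a
  induction (hws.apply a) with
  | intro a _ ihs =>
    have inner : ∀ b : Term F V, Encompass a b →
        Acc (fun x y : Term F V => (∃ d, R y d ∧ Encompass d x) ∨ PEncompass y x) b := by
      intro b
      induction (hwp.apply b) with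
      | intro b _ ihp =>
        intro hab
        constructor
        rintro c (⟨d, hbd, hdc⟩ | hpc)
        · obtain ⟨e, hae, hed⟩ := encompass_comm hctx hsub hab hbd
          exact ihs c ⟨e, hae, hed.trans hdc⟩
        · exact ihp c hpc (hab.trans hpc.1)
    exact inner a (Encompass.refl a)

end EncompAux

/-- If R is a well-founded rewrite relation then (R ∪ ⊳)/⊵ is well-founded. -/
theorem wf_encomp_relto {F V : Type} (R : Term F V → Term F V → Prop)
    (hctx : ∀ (C : Ctx F V) (s t : Term F V), R s t → R (C.fill s) (C.fill t))
    (hsub : ∀ (σ : V → Term F V) (s t : Term F V), R s t → R (s.subst σ) (t.subst σ))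
    (hwf : WellFounded (fun a b => R b a)) :
    WellFounded (fun a b : Term F V =>
      ∃ c d, Relation.ReflTransGen Encompass b c ∧ (R c d ∨ PEncompass c d) ∧
        Relation.ReflTransGen Encompass d a) := by
  have hu := wf_union hctx hsub hwf
  have hsubrel : ∀ a b : Term F V,
      (∃ c d, Relation.ReflTransGen Encompass b c ∧ (R c d ∨ PEncompass c d) ∧
        Relation.ReflTransGen Encompass d a) →
      ((∃ d, R b d ∧ Encompass d a) ∨ PEncompass b a) := by
    rintro a b ⟨c, d, hbc, hcd | hcd, hda⟩
    · obtain ⟨v, hbv, hvd⟩ := encompass_comm hctx hsub (encompass_of_rtg hbc) hcd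
      exact Or.inl ⟨v, hbv, hvd.trans (encompass_of_rtg hda)⟩
    · right
      have hbc' := encompass_of_rtg hbc
      have hda' := encompass_of_rtg hda
      refine ⟨(hbc'.trans hcd.1).trans hda', fun hba => hcd.2 ?_⟩
      exact (hda'.trans hba).trans hbc'
  exact Subrelation.wf (fun {a b} h => hsubrel a b h) hu

end KB
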